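/- Let K₁ ≥ 1 be a real number, let Δt be a real number with 0 < Δt < (2 + K₁)⁻¹, and let C > 0. Suppose (a_k)_{k≥0} is a sequence of nonnegative real numbers satisfying a_{k+1} ≤ (1 − K₁Δt/(1 + kΔt))² a_k + C²Δt(1 + kΔt)^{−2K₁} for every k ≥ 0. Then for every k ≥ 0, a_k ≤ (kΔt + 1)^{−2K₁+1} (a_0 + C²(1 + Δt)^{2K₁}). -/

import Mathlib

set_option maxHeartbeats 1600000

/-- The deterministic recursion underlying the Euler–Maruyama second moment analysis
(Theorem 3.1). -/
theorem em_recursion_polynomial_decay (K₁ Δt C : ℝ) (hK₁ : 1 ≤ K₁)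
    (hΔt0 : 0 < Δt) (hΔt : Δt < (2 + K₁)⁻¹) (hC : 0 < C)
    (a : ℕ → ℝ) (ha : ∀ k, 0 ≤ a k)
    (hrec : ∀ k : ℕ, a (k + 1) ≤
      (1 - K₁ * Δt / (1 + (k : ℝ) * Δt)) ^ 2 * a k +
        C ^ 2 * Δt * (1 + (k : ℝ) * Δt) ^ (-(2 * K₁))) :
    ∀ k : ℕ, a k ≤ ((k : ℝ) * Δt + 1) ^ (-(2 * K₁) + 1) *
      (a 0 + C ^ 2 * (1 + Δt) ^ (2 * K₁)) := by
  have hK0 : (0:ℝ) < K₁ := by linarith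
  have h2K : (0:ℝ) < 2 + K₁ := by linarith
  have hΔt' : Δt * (2 + K₁) < 1 := by
    have h := mul_lt_mul_of_pos_right hΔt h2K
    rwa [inv_mul_cancel₀ (ne_of_gt h2K)] at h
  have hKΔt : K₁ * Δt < 1 := by nlinarith
  have hC2 : 0 ≤ C ^ 2 * (1 + Δt) ^ (2 * K₁) := by positivity
  set M := a 0 + C ^ 2 * (1 + Δt) ^ (2 * K₁) with hMdef
  clear_value M
  have hM0 : 0 ≤ M := by have := ha 0; linarith
  have hMC : C ^ 2 * (1 + Δt) ^ (2 * K₁) ≤ M := by have := ha 0; linarith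
  intro k
  induction k with
  | zero =>
    simp only [Nat.cast_zero, zero_mul, zero_add, Real.one_rpow, one_mul]
    linarith [ha 0]
  | succ k ih =>
    set t : ℝ := 1 + (k : ℝ) * Δt with htdef
    have ht1 : (1:ℝ) ≤ t := by
      have : (0:ℝ) ≤ (k:ℝ) * Δt := by positivity
      linarith
    have ht0 : (0:ℝ) < t := by linarith
    set s : ℝ := t + Δt with hsdef
    have hs0 : (0:ℝ) < s := by linarith
    set u : ℝ := Δt / t with hudef
    have hu0 : 0 ≤ u := by rw [hudef]; positivity
    clear_value t s u
    have huΔt : u ≤ Δt := by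
      rw [hudef, div_le_iff₀ ht0]; nlinarith
    have h1u : (0:ℝ) < 1 + u := by linarith
    have hst : s = t * (1 + u) := by
      rw [hsdef, hudef]
      field_simp
    have hq0 : 0 ≤ 1 - K₁ * u := by nlinarith [mul_le_mul_of_nonneg_left huΔt (le_of_lt hK0)]
    -- Bernoulli: 1 - K₁ * u ≤ (1+u)^(-K₁)
    have hbern : 1 - K₁ * u ≤ (1 + u) ^ (-K₁) := by
      have hs1 : (-1:ℝ) ≤ -(u / (1 + u)) := by
        have : u / (1 + u) ≤ 1 := by
          rw [div_le_one h1u]; linarith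
        linarith
      have hb := one_add_mul_self_le_rpow_one_add hs1 hK₁
      have heq : 1 + -(u / (1 + u)) = (1 + u)⁻¹ := by
        field_simp
        ring
      rw [heq, ← Real.rpow_neg_one (1+u), ← Real.rpow_mul (le_of_lt h1u),
        show (-1:ℝ) * K₁ = -K₁ by ring] at hb
      have h1 : u / (1 + u) ≤ u := by
        rw [div_le_iff₀ h1u]; nlinarith
      have h2 : 1 - K₁ * u ≤ 1 + K₁ * -(u / (1 + u)) := by
        nlinarith
      linarith
    have hq2 : (1 - K₁ * u) ^ 2 ≤ (1 + u) ^ (-(2 * K₁)) := by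
      have h1 : (1 - K₁ * u) ^ 2 ≤ ((1 + u) ^ (-K₁)) ^ 2 :=
        pow_le_pow_left₀ hq0 hbern 2
      have h2 : ((1 + u) ^ (-K₁)) ^ 2 = (1 + u) ^ (-(2 * K₁)) := by
        rw [← Real.rpow_natCast ((1+u) ^ (-K₁)) 2, ← Real.rpow_mul (le_of_lt h1u)]
        congr 1
        push_cast
        ring
      rw [h2] at h1
      exact h1
    -- rewrite hrec in terms of t, u
    have hqu : 1 - K₁ * Δt / t = 1 - K₁ * u := by
      rw [hudef]; ring
    have hrk := hrec k
    rw [← htdef, hqu] at hrk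
    -- ih in terms of t
    have iht : a k ≤ t ^ (-(2 * K₁) + 1) * M := by
      have : (k:ℝ) * Δt + 1 = t := by rw [htdef]; ring
      rwa [this] at ih
    -- main estimates
    have key1 : (1 - K₁ * u) ^ 2 * a k ≤ (t / s) * (s ^ (-(2 * K₁) + 1) * M) := by
      have hse : s ^ (-(2 * K₁) + 1) = t ^ (-(2 * K₁) + 1) * (1 + u) ^ (-(2 * K₁) + 1) := by
        rw [hst, Real.mul_rpow (le_of_lt ht0) (le_of_lt h1u)]
      have hts : t / s = (1 + u)⁻¹ := by
        rw [hst]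
        field_simp
      have hinv : (1 + u)⁻¹ * (1 + u) ^ (-(2 * K₁) + 1) = (1 + u) ^ (-(2 * K₁)) := by
        rw [← Real.rpow_neg_one (1+u), ← Real.rpow_add h1u]
        congr 1
        ring
      have hrhs : (t / s) * (s ^ (-(2 * K₁) + 1) * M)
          = (1 + u) ^ (-(2 * K₁)) * (t ^ (-(2 * K₁) + 1) * M) := by
        rw [hse, hts, ← hinv]
        ring
      rw [hrhs]
      have h1 : (1 - K₁ * u) ^ 2 * a k ≤ (1 - K₁ * u) ^ 2 * (t ^ (-(2 * K₁) + 1) * M) :=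
        mul_le_mul_of_nonneg_left iht (sq_nonneg _)
      have h2 : (1 - K₁ * u) ^ 2 * (t ^ (-(2 * K₁) + 1) * M)
          ≤ (1 + u) ^ (-(2 * K₁)) * (t ^ (-(2 * K₁) + 1) * M) := by
        apply mul_le_mul_of_nonneg_right hq2
        positivity
      linarith
    have key2 : C ^ 2 * Δt * t ^ (-(2 * K₁)) ≤ (Δt / s) * (s ^ (-(2 * K₁) + 1) * M) := by
      have hsneg : (Δt / s) * (s ^ (-(2 * K₁) + 1) * M) = Δt * (s ^ (-(2 * K₁)) * M) := by
        have h : s ^ (-(2 * K₁) + 1) = s ^ (-(2 * K₁)) * s := by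
          rw [Real.rpow_add hs0, Real.rpow_one]
        rw [h]
        field_simp
      rw [hsneg]
      have hcancel : (1 + Δt) ^ (-(2 * K₁)) * (1 + Δt) ^ (2 * K₁) = 1 := by
        rw [← Real.rpow_add (by linarith), neg_add_cancel, Real.rpow_zero]
      have hstep : C ^ 2 * t ^ (-(2 * K₁)) ≤ s ^ (-(2 * K₁)) * M := by
        have hsle : s ≤ t * (1 + Δt) := by
          rw [hst]
          nlinarith [mul_le_mul_of_nonneg_right ht1 (le_of_lt hΔt0)]
        have hmono : (t * (1 + Δt)) ^ (-(2 * K₁)) ≤ s ^ (-(2 * K₁)) :=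
          Real.rpow_le_rpow_of_nonpos hs0 hsle (by nlinarith)
        have hsplit : (t * (1 + Δt)) ^ (-(2 * K₁))
            = t ^ (-(2 * K₁)) * (1 + Δt) ^ (-(2 * K₁)) :=
          Real.mul_rpow (le_of_lt ht0) (by linarith)
        have h1 : C ^ 2 * t ^ (-(2 * K₁))
            = (t ^ (-(2 * K₁)) * (1 + Δt) ^ (-(2 * K₁))) * (C ^ 2 * (1 + Δt) ^ (2 * K₁)) := by
          linear_combination (-(C ^ 2 * t ^ (-(2 * K₁)))) * hcancel
        rw [h1, ← hsplit]
        apply mul_le_mul hmono hMC hC2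
        positivity
      calc C ^ 2 * Δt * t ^ (-(2 * K₁)) = Δt * (C ^ 2 * t ^ (-(2 * K₁))) := by ring
        _ ≤ Δt * (s ^ (-(2 * K₁)) * M) :=
            mul_le_mul_of_nonneg_left hstep (le_of_lt hΔt0)
    have hsum : (t / s) + (Δt / s) = 1 := by
      rw [← add_div, ← hsdef, div_self (ne_of_gt hs0)]
    have hgoalbase : ((k+1 : ℕ) : ℝ) * Δt + 1 = s := by
      push_cast
      rw [hsdef, htdef]; ring
    rw [hgoalbase]
    calc a (k + 1) ≤ (1 - K₁ * u) ^ 2 * a k + C ^ 2 * Δt * t ^ (-(2 * K₁)) := hrk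
      _ ≤ (t / s) * (s ^ (-(2 * K₁) + 1) * M) + (Δt / s) * (s ^ (-(2 * K₁) + 1) * M) :=
          add_le_add key1 key2
      _ = ((t / s) + (Δt / s)) * (s ^ (-(2 * K₁) + 1) * M) := by ring
      _ = s ^ (-(2 * K₁) + 1) * M := by rw [hsum, one_mul]
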